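/- With q_k = exp(2πiθ_k) and cluster coordinates (x,y,z), the transformed monodromy matrices M̃₁, M̃₂, M̃₃ of the middle convolution realization of w₂ (e.g. M̃₁ = [[0, q₁(1+z+xz)/(xz(1+x+xy))],[−(1+x+xy)/(y(1+z+xz)), 1 + q₁/(xyz)]]) satisfy det(M̃_k) = q_k/(xyz) and tr(M̃_k) = 1 + q_k/(xyz), so that the eigenvalues of M̃_k are {1, q_k/(xyz)} for k = 1, 2, 3. -/

import Mathlib

open Matrix Complex

set_option maxHeartbeats 2000000 in

theorem stmt16 (θ₁ θ₂ θ₃ : ℂ) (x y z : ℂ) (hx : x ≠ 0) (hy : y ≠ 0) (hz : z ≠ 0)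
    (hO : 1 + x + x * y ≠ 0) (hB : 1 + y + y * z ≠ 0) (hG : 1 + z + x * z ≠ 0) :
    let q₁ : ℂ := Complex.exp (2 * Real.pi * Complex.I * θ₁)
    let q₂ : ℂ := Complex.exp (2 * Real.pi * Complex.I * θ₂)
    let q₃ : ℂ := Complex.exp (2 * Real.pi * Complex.I * θ₃)
    let M₁ : Matrix (Fin 2) (Fin 2) ℂ :=
      !![0, q₁ * (1 + z + x * z) / (x * z * (1 + x + x * y));
         -((1 + x + x * y) / (y * (1 + z + x * z))), 1 + q₁ / (x * y * z)]
    let M₂ : Matrix (Fin 2) (Fin 2) ℂ :=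
      !![1 + q₂ * (1 + y) * (1 + z + x * z) / (x * y * z * (1 + y + y * z)),
         ((1 + y) * (1 + z + x * z) / z) *
           (q₂ / (x * y * (1 + y + y * z)) + 1 / (1 + x + x * y));
         -(q₂ * (1 + x + x * y) / (x * y * (1 + y + y * z))),
         -(q₂ * (1 + x + x * y) / (x * y * (1 + y + y * z)))]
    let M₃ : Matrix (Fin 2) (Fin 2) ℂ :=
      !![q₃ / (x * y * z) + (1 + z) * (1 + x + x * y) / (x * (1 + y + y * z)),
         (1 + z + x * z) / (x * (1 + y + y * z));
         -((1 + z) * (1 + x + x * y) *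
             (q₃ * (1 + y + y * z) + y * z * (1 + z + x * z)) /
           (x * y * z * (1 + y + y * z) * (1 + z + x * z))),
         -((1 + z + x * z) / (x * (1 + y + y * z)))]
    (M₁.det = q₁ / (x * y * z) ∧ M₁.trace = 1 + q₁ / (x * y * z)) ∧
    (M₂.det = q₂ / (x * y * z) ∧ M₂.trace = 1 + q₂ / (x * y * z)) ∧
    (M₃.det = q₃ / (x * y * z) ∧ M₃.trace = 1 + q₃ / (x * y * z)) := by
  intro q₁ q₂ q₃ M₁ M₂ M₃
  have h1 : x * y * z * (1 + y + y * z) * (x * y * (1 + y + y * z)) ≠ 0 := by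
    simp [hx, hy, hz, hB, mul_ne_zero]
  have h2 : z * (x * y * (1 + y + y * z) * (1 + x + x * y)) * (x * y * (1 + y + y * z)) ≠ 0 := by
    simp [hx, hy, hz, hB, hO, mul_ne_zero]
  have h3 : x * y * z ≠ 0 := by simp [hx, hy, hz]
  have h4 : x * (1 + y + y * z) ≠ 0 := mul_ne_zero hx hB
  have h5 : x * y * z * (x * (1 + y + y * z)) ≠ 0 := mul_ne_zero h3 h4
  have h6 : x * y * z * (1 + y + y * z) * (1 + z + x * z) ≠ 0 :=
    mul_ne_zero (mul_ne_zero h3 hB) hG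
  refine ⟨⟨?_, ?_⟩, ⟨?_, ?_⟩, ⟨?_, ?_⟩⟩ <;>
    simp [M₁, M₂, M₃, Matrix.det_fin_two, Matrix.trace_fin_two] <;>
    field_simp [hx, hy, hz, hO, hB, hG, mul_comm] <;> ring
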